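/- The sequence (0,0),(1,0),(0,1),(2,0),(1,1),(0,2),(3,0),(2,1),(1,2),(0,3) in ℤ² has the property that for every polynomial F ∈ ℚ[x,y] of total degree ≤ 3, if F takes integer values at these ten points then F takes integer values at every point of ℤ². (These points form a d-sequence of length 9 for every d ∈ ℤ for the set ℤ².) -/
import Mathlib


open MvPolynomial Finset

noncomputable def ee (p : ℕ × ℕ) : Fin 2 →₀ ℕ := Finsupp.single 0 p.1 + Finsupp.single 1 p.2

lemma key (F : MvPolynomial (Fin 2) ℚ) (hdeg : F.totalDegree ≤ 3) (x y : ℚ) :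
    eval ![x, y] F = ∑ p ∈ range 4 ×ˢ range 4, F.coeff (ee p) * (x ^ p.1 * y ^ p.2) := by
  have hee : ∀ p : ℕ × ℕ, (ee p) 0 = p.1 ∧ (ee p) 1 = p.2 := by
    intro p; constructor <;> simp [ee, Finsupp.single_apply]
  have hinj : ∀ p ∈ range 4 ×ˢ range 4, ∀ q ∈ range 4 ×ˢ range 4, ee p = ee q → p = q := by
    intro p _ q _ h
    have h0 := congrArg (fun f => f 0) h
    have h1 := congrArg (fun f => f 1) h
    simp only [(hee p).1, (hee p).2, (hee q).1, (hee q).2] at h0 h1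
    exact Prod.ext h0 h1
  have hsub : F.support ⊆ (range 4 ×ˢ range 4).image ee := by
    intro d hd
    simp only [Finset.mem_image, Finset.mem_product, Finset.mem_range]
    refine ⟨(d 0, d 1), ?_, ?_⟩
    · have h3 : d 0 + d 1 ≤ 3 := by
        refine le_trans ?_ hdeg
        refine le_trans ?_ (MvPolynomial.le_totalDegree hd)
        rw [Finsupp.sum_fintype _ _ (fun _ => rfl), Fin.sum_univ_two]
      omega
    · ext i
      fin_cases i <;> simp [ee, Finsupp.single_apply]
  rw [eval_eq', Finset.sum_subset hsub
    (fun d _ hd => by rw [MvPolynomial.notMem_support_iff.1 hd, zero_mul]),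
    Finset.sum_image hinj]
  apply Finset.sum_congr rfl
  intro p _
  rw [Fin.prod_univ_two, (hee p).1, (hee p).2]
  simp

lemma ee_degree (p : ℕ × ℕ) : (ee p).sum (fun _ e => e) = p.1 + p.2 := by
  rw [Finsupp.sum_fintype _ _ (fun _ => rfl), Fin.sum_univ_two]
  simp [ee, Finsupp.single_apply]

lemma key' (F : MvPolynomial (Fin 2) ℚ) (hdeg : F.totalDegree ≤ 3) (x y : ℚ) :
    eval ![x, y] F =
      F.coeff (ee (0,0)) + F.coeff (ee (1,0)) * x + F.coeff (ee (0,1)) * y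
      + F.coeff (ee (2,0)) * x^2 + F.coeff (ee (1,1)) * (x*y) + F.coeff (ee (0,2)) * y^2
      + F.coeff (ee (3,0)) * x^3 + F.coeff (ee (2,1)) * (x^2*y)
      + F.coeff (ee (1,2)) * (x*y^2) + F.coeff (ee (0,3)) * y^3 := by
  have hz : ∀ p : ℕ × ℕ, 3 < p.1 + p.2 → F.coeff (ee p) = 0 := by
    intro p hp
    apply MvPolynomial.coeff_eq_zero_of_totalDegree_lt
    rw [show (∑ i ∈ (ee p).support, (ee p) i) = (ee p).sum (fun _ e => e) from rfl, ee_degree]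
    omega
  rw [key F hdeg x y]
  rw [Finset.sum_product]
  simp only [Finset.sum_range_succ, Finset.sum_range_zero]
  rw [hz (1,3) (by norm_num), hz (2,2) (by norm_num), hz (2,3) (by norm_num),
      hz (3,1) (by norm_num), hz (3,2) (by norm_num), hz (3,3) (by norm_num)]
  ring

lemma six_dvd (a : ℤ) : ∃ k : ℤ, a * (a-1) * (a-2) = 6 * k := by
  have h : ∀ x : ZMod 6, x * (x-1) * (x-2) = 0 := by decide
  have h2 : ((a * (a-1) * (a-2) : ℤ) : ZMod 6) = 0 := by push_cast; exact h a
  obtain ⟨k, hk⟩ := (ZMod.intCast_zmod_eq_zero_iff_dvd _ 6).1 h2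
  exact ⟨k, hk⟩

lemma two_dvd (a : ℤ) : ∃ k : ℤ, a * (a-1) = 2 * k := by
  obtain ⟨k, hk⟩ := Int.even_mul_succ_self (a - 1)
  exact ⟨k, by linarith⟩

/-- any F ∈ ℚ[x,y] of total degree ≤ 3 which is integer-valued at the ten
points (0,0),(1,0),(0,1),(2,0),(1,1),(0,2),(3,0),(2,1),(1,2),(0,3) is integer-valued on
all of ℤ². -/
theorem stmt9 (F : MvPolynomial (Fin 2) ℚ) (hdeg : F.totalDegree ≤ 3)
    (hpts : ∀ p ∈ ([(0,0),(1,0),(0,1),(2,0),(1,1),(0,2),(3,0),(2,1),(1,2),(0,3)] :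
        List (ℤ × ℤ)), ∃ m : ℤ, MvPolynomial.eval ![(p.1 : ℚ), (p.2 : ℚ)] F = (m : ℚ)) :
    ∀ a b : ℤ, ∃ m : ℤ, MvPolynomial.eval ![(a : ℚ), (b : ℚ)] F = (m : ℚ) := by
  obtain ⟨m00, h00⟩ := hpts (0,0) (by simp)
  obtain ⟨m10, h10⟩ := hpts (1,0) (by simp)
  obtain ⟨m01, h01⟩ := hpts (0,1) (by simp)
  obtain ⟨m20, h20⟩ := hpts (2,0) (by simp)
  obtain ⟨m11, h11⟩ := hpts (1,1) (by simp)
  obtain ⟨m02, h02⟩ := hpts (0,2) (by simp)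
  obtain ⟨m30, h30⟩ := hpts (3,0) (by simp)
  obtain ⟨m21, h21⟩ := hpts (2,1) (by simp)
  obtain ⟨m12, h12⟩ := hpts (1,2) (by simp)
  obtain ⟨m03, h03⟩ := hpts (0,3) (by simp)
  simp only [key' F hdeg] at h00 h10 h01 h20 h11 h02 h30 h21 h12 h03
  norm_num at h00 h10 h01 h20 h11 h02 h30 h21 h12 h03
  intro a b
  obtain ⟨p2, hp2⟩ := two_dvd a
  obtain ⟨q2, hq2⟩ := two_dvd b
  obtain ⟨p3, hp3⟩ := six_dvd a
  obtain ⟨q3, hq3⟩ := six_dvd b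
  refine ⟨(1 - a - b + p2 + a*b + q2 - p3 - p2*b - a*q2 - q3) * m00
    + (a - 2*p2 + 3*p3 - a*b + 2*p2*b + a*q2) * m10
    + (b - 2*q2 + 3*q3 - a*b + 2*a*q2 + p2*b) * m01
    + (p2 - 3*p3 - p2*b) * m20
    + (a*b - 2*p2*b - 2*a*q2) * m11
    + (q2 - 3*q3 - a*q2) * m02
    + p3 * m30 + p2*b * m21 + a*q2 * m12 + q3 * m03, ?_⟩
  rw [key' F hdeg]
  have hp2' : ((p2 : ℚ)) = (a : ℚ) * ((a:ℚ)-1) / 2 := by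
    have : ((a * (a-1) : ℤ) : ℚ) = ((2 * p2 : ℤ) : ℚ) := by rw [hp2]
    push_cast at this; linarith
  have hq2' : ((q2 : ℚ)) = (b : ℚ) * ((b:ℚ)-1) / 2 := by
    have : ((b * (b-1) : ℤ) : ℚ) = ((2 * q2 : ℤ) : ℚ) := by rw [hq2]
    push_cast at this; linarith
  have hp3' : ((p3 : ℚ)) = (a : ℚ) * ((a:ℚ)-1) * ((a:ℚ)-2) / 6 := by
    have : ((a * (a-1) * (a-2) : ℤ) : ℚ) = ((6 * p3 : ℤ) : ℚ) := by rw [hp3]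
    push_cast at this; linarith
  have hq3' : ((q3 : ℚ)) = (b : ℚ) * ((b:ℚ)-1) * ((b:ℚ)-2) / 6 := by
    have : ((b * (b-1) * (b-2) : ℤ) : ℚ) = ((6 * q3 : ℤ) : ℚ) := by rw [hq3]
    push_cast at this; linarith
  push_cast
  rw [hp2', hq2', hp3', hq3']
  set x : ℚ := (a : ℚ)
  set y : ℚ := (b : ℚ)
  linear_combination
    (1 - x - y + x*(x-1)/2 + x*y + y*(y-1)/2 - x*(x-1)*(x-2)/6 - (x*(x-1)/2)*y
      - x*(y*(y-1)/2) - y*(y-1)*(y-2)/6) * h00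
    + (x - 2*(x*(x-1)/2) + 3*(x*(x-1)*(x-2)/6) - x*y + 2*(x*(x-1)/2)*y + x*(y*(y-1)/2)) * h10
    + (y - 2*(y*(y-1)/2) + 3*(y*(y-1)*(y-2)/6) - x*y + 2*x*(y*(y-1)/2) + (x*(x-1)/2)*y) * h01
    + (x*(x-1)/2 - 3*(x*(x-1)*(x-2)/6) - (x*(x-1)/2)*y) * h20
    + (x*y - 2*(x*(x-1)/2)*y - 2*x*(y*(y-1)/2)) * h11
    + (y*(y-1)/2 - 3*(y*(y-1)*(y-2)/6) - x*(y*(y-1)/2)) * h02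
    + (x*(x-1)*(x-2)/6) * h30 + ((x*(x-1)/2)*y) * h21
    + (x*(y*(y-1)/2)) * h12 + (y*(y-1)*(y-2)/6) * h03
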